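/- Accelerated halving of function error: let f be L-smooth and μ-strongly convex in ‖·‖₂ with minimizer x*. Run mirror prox with λ = 1 + √(L/μ) on the Fenchel-game operator g(x,y) = (y, ∇f*(y) - x) with regularizer r(x,y) = (μ/2)‖x‖₂² + f*(y), initialized at z₀ = (x₀, ∇f(x₀)), for T ≥ 4λ iterations. Writing each half-iterate as w_t = (x_{t+1/2}, ∇f(v_{t+1/2})) and setting v̄ = (1/T)Σ_{t<T} v_{t+1/2}, one has f(v̄) - f(x*) ≤ (1/2)(f(x₀) - f(x*)). -/

import Mathlib

set_option maxHeartbeats 1000000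


open scoped RealInnerProductSpace

section Aux

variable {E : Type*} [NormedAddCommGroup E] [InnerProductSpace ℝ E]

lemma amgm' (c : ℝ) (hc : 0 < c) (u v : E) :
    ⟪u, v⟫ ≤ 1 / (2 * c) * ‖u‖ ^ 2 + c / 2 * ‖v‖ ^ 2 := by
  have h1 : ⟪u, v⟫ ≤ ‖u‖ * ‖v‖ := real_inner_le_norm u v
  have h2 : ‖u‖ * ‖v‖ * (2 * c) ≤ ‖u‖ ^ 2 + c ^ 2 * ‖v‖ ^ 2 := by
    nlinarith [sq_nonneg (‖u‖ - c * ‖v‖)]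
  have h3 : ‖u‖ * ‖v‖ ≤ (‖u‖ ^ 2 + c ^ 2 * ‖v‖ ^ 2) / (2 * c) := by
    rw [le_div_iff₀ (by linarith)]; exact h2
  have h4 : (‖u‖ ^ 2 + c ^ 2 * ‖v‖ ^ 2) / (2 * c) = 1 / (2 * c) * ‖u‖ ^ 2 + c / 2 * ‖v‖ ^ 2 := by
    field_simp
  linarith [h4 ▸ h3]

lemma cocoercive (f : E → ℝ) (f' : E → E) (L : ℝ) (hL : 0 < L)
    (hsmooth : ∀ x y, f y ≤ f x + ⟪f' x, y - x⟫ + L / 2 * ‖y - x‖ ^ 2)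
    (hconv : ∀ x y, f x + ⟪f' x, y - x⟫ ≤ f y)
    (a b : E) :
    ‖f' a - f' b‖ ^ 2 ≤ 2 * L * (f a - f b - ⟪f' b, a - b⟫) := by
  set Δ := f' a - f' b with hΔ
  have h1 := hconv b (a - (1 / L) • Δ)
  have h2 := hsmooth a (a - (1 / L) • Δ)
  have e1 : (a - (1 / L) • Δ) - a = -((1 / L) • Δ) := by abel
  have e2 : (a - (1 / L) • Δ) - b = (a - b) - (1 / L) • Δ := by abel
  rw [e1] at h2
  rw [e2] at h1
  rw [inner_neg_right, inner_smul_right] at h2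
  rw [inner_sub_right, inner_smul_right] at h1
  rw [norm_neg, norm_smul, Real.norm_eq_abs, abs_of_pos (by positivity : (0:ℝ) < 1 / L)] at h2
  have key : ⟪f' a, Δ⟫ - ⟪f' b, Δ⟫ = ‖Δ‖ ^ 2 := by
    rw [← inner_sub_left, ← hΔ, real_inner_self_eq_norm_sq]
  have hL' : L ≠ 0 := ne_of_gt hL
  have expand : L / 2 * ((1 / L) * ‖Δ‖) ^ 2 = ‖Δ‖ ^ 2 / (2 * L) := by
    field_simp
  rw [expand] at h2
  have key' : (1/L) * ⟪f' a, Δ⟫ - (1/L) * ⟪f' b, Δ⟫ = (1/L) * ‖Δ‖ ^ 2 := by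
    linear_combination (1/L) * key
  have h3 : ‖Δ‖ ^ 2 / (2 * L) ≤ f a - f b - ⟪f' b, a - b⟫ := by
    have e : (1/L) * ‖Δ‖ ^ 2 - ‖Δ‖ ^ 2 / (2 * L) = ‖Δ‖ ^ 2 / (2 * L) := by
      field_simp; ring
    linarith
  have h4 := mul_le_mul_of_nonneg_left h3 (by positivity : (0:ℝ) ≤ 2 * L)
  have e2' : 2 * L * (‖Δ‖ ^ 2 / (2 * L)) = ‖Δ‖ ^ 2 := by field_simp
  linarith [e2' ▸ h4]

lemma polar (u v : E) : ⟪u, v⟫ = (‖u + v‖ ^ 2 - ‖u‖ ^ 2 - ‖v‖ ^ 2) / 2 := by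
  have := norm_add_sq_real u v; linarith

lemma step_ineq (f : E → ℝ) (f' : E → E)
    (μ L s : ℝ) (hμ : 0 < μ) (hs : 0 < s) (hLs : μ * s ^ 2 = L)
    (hsmooth : ∀ x y, f y ≤ f x + ⟪f' x, y - x⟫ + L / 2 * ‖y - x‖ ^ 2)
    (hsc : ∀ x y, f x + ⟪f' x, y - x⟫ + μ / 2 * ‖y - x‖ ^ 2 ≤ f y)
    (xs a b a' p q p' : E)
    (hb : b = a - (1 / (μ * (1 + s))) • f' p)
    (ha' : a' = a - (1 / (μ * (1 + s))) • f' q)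
    (hq : q = p + (1 / (1 + s)) • (a - p))
    (hp' : p' = p + (1 / (1 + s)) • (b - q)) :
    f q - f xs ≤ (1 + s) * (μ / 2 * ‖a - xs‖ ^ 2 - μ / 2 * ‖a' - xs‖ ^ 2 + (f p - f p')) := by
  have hs1 : (0:ℝ) < 1 + s := by linarith
  have hc : (0:ℝ) < μ * (1 + s) := by positivity
  have hL : (0:ℝ) < L := by rw [← hLs]; positivity
  have hconv : ∀ x y, f x + ⟪f' x, y - x⟫ ≤ f y := fun x y => by
    have h := hsc x y
    have h2 : (0:ℝ) ≤ μ / 2 * ‖y - x‖ ^ 2 := by positivity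
    linarith
  -- vector identities
  have hfq : f' q = (μ * (1 + s)) • (a - a') := by
    rw [ha', sub_sub_cancel, smul_smul, mul_one_div_cancel hc.ne', one_smul]
  have hfp : f' p = (μ * (1 + s)) • (a - b) := by
    rw [hb, sub_sub_cancel, smul_smul, mul_one_div_cancel hc.ne', one_smul]
  have hqb0 : p - p' = (1 / (1 + s)) • (q - b) := by
    rw [hp']; module
  have hqb : q - b = (1 + s) • (p - p') := by
    rw [hqb0, smul_smul, mul_one_div_cancel hs1.ne', one_smul]
  have hpa0 : p - q = (1 / (1 + s)) • (p - a) := by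
    rw [hq]; module
  have hpa : p - a = (1 + s) • (p - q) := by
    rw [hpa0, smul_smul, mul_one_div_cancel hs1.ne', one_smul]
  -- scalar identities
  have hP1 : f q - f xs ≤ ⟪f' q, q - xs⟫ := by
    have h := hsc q xs
    have h2 : ⟪f' q, xs - q⟫ = -⟪f' q, q - xs⟫ := by
      rw [← inner_neg_right, neg_sub]
    have h3 : (0:ℝ) ≤ μ / 2 * ‖xs - q‖ ^ 2 := by positivity
    linarith
  have hP2 : ⟪f' q, a' - xs⟫
      = (1 + s) * (μ / 2) * (‖a - xs‖ ^ 2 - ‖a' - xs‖ ^ 2 - ‖a - a'‖ ^ 2) := by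
    rw [hfq, real_inner_smul_left, polar, sub_add_sub_cancel]
    ring
  have hP4 : ⟪f' p, b - a'⟫
      = (1 + s) * (μ / 2) * (‖a - a'‖ ^ 2 - ‖a' - b‖ ^ 2 - ‖a - b‖ ^ 2) := by
    rw [hfp, real_inner_smul_left, polar, sub_add_sub_cancel, norm_sub_rev b a']
    ring
  have hP3 : ⟪f' p', q - b⟫ = (1 + s) * ⟪f' p', p - p'⟫ := by
    rw [hqb, real_inner_smul_right]
  have hP5 : ⟪f' q, p - a⟫ - ⟪f' p', p - a⟫
      = (1 + s) * (⟪f' q, p - q⟫ - ⟪f' p', p - q⟫) := by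
    rw [hpa, real_inner_smul_right, real_inner_smul_right]; ring
  -- relative Lipschitzness pieces
  have hcoco1 := cocoercive f f' L hL hsmooth hconv p q
  have hcoco2 := cocoercive f f' L hL hsmooth hconv q p'
  have hC1 : ⟪f' q, b - a'⟫ - ⟪f' p, b - a'⟫
      ≤ s * (f p - f q - ⟪f' q, p - q⟫) + s * (μ / 2) * ‖a' - b‖ ^ 2 := by
    have ham := amgm' (s * μ) (mul_pos hs hμ) (f' q - f' p) (b - a')
    rw [norm_sub_rev (f' q) (f' p), norm_sub_rev b a', inner_sub_left] at ham
    have hsc1 : 1 / (2 * (s * μ)) * ‖f' p - f' q‖ ^ 2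
        ≤ s * (f p - f q - ⟪f' q, p - q⟫) := by
      have h := mul_le_mul_of_nonneg_left hcoco1
        (by positivity : (0:ℝ) ≤ 1 / (2 * (s * μ)))
      have e : 1 / (2 * (s * μ)) * (2 * L * (f p - f q - ⟪f' q, p - q⟫))
          = s * (f p - f q - ⟪f' q, p - q⟫) := by
        rw [← hLs]; field_simp
      linarith [e ▸ h]
    nlinarith [ham, hsc1]
  have hC2b : ⟪f' q, a - b⟫ - ⟪f' p', a - b⟫
      ≤ s * (μ / 2) * ‖a - b‖ ^ 2 + s * (f q - f p' - ⟪f' p', q - p'⟫) := by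
    have ham := amgm' (s * μ) (mul_pos hs hμ) (f' q - f' p') (a - b)
    rw [inner_sub_left] at ham
    have hsc2 : 1 / (2 * (s * μ)) * ‖f' q - f' p'‖ ^ 2
        ≤ s * (f q - f p' - ⟪f' p', q - p'⟫) := by
      have h := mul_le_mul_of_nonneg_left hcoco2
        (by positivity : (0:ℝ) ≤ 1 / (2 * (s * μ)))
      have e : 1 / (2 * (s * μ)) * (2 * L * (f q - f p' - ⟪f' p', q - p'⟫))
          = s * (f q - f p' - ⟪f' p', q - p'⟫) := by
        rw [← hLs]; field_simp
      linarith [e ▸ h]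
    nlinarith [ham, hsc2]
  have hn0 : (0:ℝ) ≤ f p - f p' - ⟪f' p', p - p'⟫ := by
    have h := hconv p' p; linarith
  have hn2 : (0:ℝ) ≤ μ * ‖a' - b‖ ^ 2 := by positivity
  have hn3 : (0:ℝ) ≤ μ * ‖a - b‖ ^ 2 := by positivity
  simp only [inner_sub_right] at hP1 hP2 hP3 hP4 hP5 hC1 hC2b hn0 ⊢
  linarith [hP1, hP2, hP3, hP4, hP5, hC1, hC2b, hn0, hn2, hn3]

end Aux

/-- Accelerated halving of function error (Theorem 1): for `f` `L`-smooth and `μ`-strongly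
convex with minimizer `x*`, running mirror prox with `λ = 1 + √(L/μ)` on the Fenchel game for
`T ≥ 4λ` iterations — whose iterates admit the closed form of Algorithm 2 — the average
`v̄ = (1/T)∑_{t<T} v_{t+1/2}` satisfies `f(v̄) - f(x*) ≤ (1/2)(f(x₀) - f(x*))`. -/
theorem accelerated_halving {d : ℕ}
    (f : EuclideanSpace ℝ (Fin d) → ℝ)
    (f' : EuclideanSpace ℝ (Fin d) → EuclideanSpace ℝ (Fin d))
    (μ L : ℝ) (hμ : 0 < μ) (hμL : μ ≤ L)
    (hdiff : ∀ x, HasGradientAt f (f' x) x)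
    (hsmooth : ∀ x y, f y ≤ f x + ⟪f' x, y - x⟫ + L / 2 * ‖y - x‖ ^ 2)
    (hsc : ∀ x y, f x + ⟪f' x, y - x⟫ + μ / 2 * ‖y - x‖ ^ 2 ≤ f y)
    (xs : EuclideanSpace ℝ (Fin d)) (hmin : ∀ x, f xs ≤ f x) (hgrad0 : f' xs = 0)
    (lam : ℝ) (hlamdef : lam = 1 + Real.sqrt (L / μ))
    (x₀ : EuclideanSpace ℝ (Fin d))
    (x v xh vh : ℕ → EuclideanSpace ℝ (Fin d))
    (hx0 : x 0 = x₀) (hv0 : v 0 = x₀)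
    (hxh : ∀ t, xh t = x t - (1 / (μ * lam)) • f' (v t))
    (hvh : ∀ t, vh t = v t + (1 / lam) • (x t - v t))
    (hx : ∀ t, x (t + 1) = x t - (1 / (μ * lam)) • f' (vh t))
    (hv : ∀ t, v (t + 1) = v t + (1 / lam) • (xh t - vh t))
    (T : ℕ) (hT : 4 * lam ≤ (T : ℝ)) :
    f ((T : ℝ)⁻¹ • ∑ t ∈ Finset.range T, vh t) - f xs ≤ (1 / 2) * (f x₀ - f xs) := by
  have hL0 : (0:ℝ) < L := lt_of_lt_of_le hμ hμL
  set s := Real.sqrt (L / μ) with hsdef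
  have hs : 0 < s := Real.sqrt_pos.mpr (by positivity)
  have hLs : μ * s ^ 2 = L := by
    rw [hsdef, Real.sq_sqrt (by positivity : (0:ℝ) ≤ L / μ)]
    field_simp
  subst hlamdef
  have hstep : ∀ t, f (vh t) - f xs
      ≤ (1 + s) * (μ / 2 * ‖x t - xs‖ ^ 2 - μ / 2 * ‖x (t+1) - xs‖ ^ 2
          + (f (v t) - f (v (t+1)))) := fun t =>
    step_ineq f f' μ L s hμ hs hLs hsmooth hsc xs (x t) (xh t) (x (t+1)) (v t) (vh t)
      (v (t+1)) (hxh t) (hx t) (hvh t) (hv t)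
  have hT1 : (0:ℝ) < T := by nlinarith [hs]
  have hTne : (T:ℝ) ≠ 0 := ne_of_gt hT1
  set Φ : ℕ → ℝ := fun t => μ / 2 * ‖x t - xs‖ ^ 2 + f (v t) with hΦ
  have hsum : ∑ t ∈ Finset.range T, (f (vh t) - f xs) ≤ (1 + s) * (Φ 0 - Φ T) := by
    have h1 : ∑ t ∈ Finset.range T, (f (vh t) - f xs)
        ≤ ∑ t ∈ Finset.range T, (1 + s) * (Φ t - Φ (t+1)) :=
      Finset.sum_le_sum (fun t _ => by
        have h := hstep t
        simp only [hΦ]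
        linarith)
    rw [← Finset.mul_sum, Finset.sum_range_sub'] at h1
    exact h1
  have hΔ : 0 ≤ f x₀ - f xs := by linarith [hmin x₀]
  have hΦ0 : Φ 0 ≤ f x₀ - f xs + f x₀ := by
    have h := hsc xs x₀
    rw [hgrad0, inner_zero_left] at h
    simp only [hΦ, hx0, hv0]
    linarith
  have hΦT : f xs ≤ Φ T := by
    simp only [hΦ]
    have h2 : (0:ℝ) ≤ μ / 2 * ‖x T - xs‖ ^ 2 := by positivity
    linarith [hmin (v T)]
  set S := ∑ t ∈ Finset.range T, vh t with hS
  set vb := (T:ℝ)⁻¹ • S with hvb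
  have hsum0 : ∑ t ∈ Finset.range T, (vh t - vb) = 0 := by
    rw [Finset.sum_sub_distrib, Finset.sum_const, Finset.card_range, ← hS,
      ← Nat.cast_smul_eq_nsmul ℝ T vb, hvb, smul_smul, mul_inv_cancel₀ hTne, one_smul,
      sub_self]
  have hjen : (T:ℝ) * f vb ≤ ∑ t ∈ Finset.range T, f (vh t) := by
    have h1 : ∀ t ∈ Finset.range T, f vb + ⟪f' vb, vh t - vb⟫ ≤ f (vh t) := fun t _ => by
      have h := hsc vb (vh t)
      have h2 : (0:ℝ) ≤ μ / 2 * ‖vh t - vb‖ ^ 2 := by positivity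
      linarith
    have h2 := Finset.sum_le_sum h1
    rw [Finset.sum_add_distrib, Finset.sum_const, Finset.card_range, ← inner_sum, hsum0,
      inner_zero_right, add_zero, nsmul_eq_mul] at h2
    exact h2
  have e : ∑ t ∈ Finset.range T, (f (vh t) - f xs)
      = (∑ t ∈ Finset.range T, f (vh t)) - T * f xs := by
    rw [Finset.sum_sub_distrib, Finset.sum_const, Finset.card_range, nsmul_eq_mul]
  have hmul : (1 + s) * (Φ 0 - Φ T) ≤ (1 + s) * (2 * (f x₀ - f xs)) := by
    apply mul_le_mul_of_nonneg_left _ (by linarith : (0:ℝ) ≤ 1 + s)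
    linarith
  have hfinal : (T:ℝ) * (f vb - f xs) ≤ (1 + s) * (2 * (f x₀ - f xs)) := by
    nlinarith [hjen, hsum, e, hmul]
  nlinarith [hfinal, hT, hΔ, hT1, hs]
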